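/- Every thesis of Łukasiewicz's calculus is true in every traditional model, and conversely (completeness): a formula is a thesis of Łukasiewicz's calculus if and only if it is a traditional set-theoretic tautology. -/

import Mathlib

inductive LForm : Type
  | atomA : Nat → Nat → LForm
  | atomI : Nat → Nat → LForm
  | atomE : Nat → Nat → LForm
  | atomO : Nat → Nat → LForm
  | neg : LForm → LForm
  | conj : LForm → LForm → LForm
  | disj : LForm → LForm → LForm
  | impl : LForm → LForm → LForm
  | equiv : LForm → LForm → LForm

namespace LForm

/-- Boolean evaluation of a formula given a Boolean valuation of the atoms. -/
def beval (vA vI vE vO : Nat → Nat → Bool) : LForm → Bool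
  | atomA s p => vA s p
  | atomI s p => vI s p
  | atomE s p => vE s p
  | atomO s p => vO s p
  | neg φ => !(beval vA vI vE vO φ)
  | conj φ ψ => beval vA vI vE vO φ && beval vA vI vE vO ψ
  | disj φ ψ => beval vA vI vE vO φ || beval vA vI vE vO ψ
  | impl φ ψ => !(beval vA vI vE vO φ) || beval vA vI vE vO ψ
  | equiv φ ψ => beval vA vI vE vO φ == beval vA vI vE vO ψ

/-- Substitution instances of classical propositional tautologies. -/
def Taut (φ : LForm) : Prop := ∀ vA vI vE vO, beval vA vI vE vO φ = true

/-- Uniform substitution of name letters. -/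
def rename (σ : Nat → Nat) : LForm → LForm
  | atomA s p => atomA (σ s) (σ p)
  | atomI s p => atomI (σ s) (σ p)
  | atomE s p => atomE (σ s) (σ p)
  | atomO s p => atomO (σ s) (σ p)
  | neg φ => neg (rename σ φ)
  | conj φ ψ => conj (rename σ φ) (rename σ ψ)
  | disj φ ψ => disj (rename σ φ) (rename σ ψ)
  | impl φ ψ => impl (rename σ φ) (rename σ ψ)
  | equiv φ ψ => equiv (rename σ φ) (rename σ ψ)

/-- Set-theoretic interpretation in a model given by a denotation function. -/
def eval {α : Type} (D : Nat → Set α) : LForm → Prop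
  | atomA s p => D s ⊆ D p
  | atomI s p => (D s ∩ D p).Nonempty
  | atomE s p => ¬ (D s ∩ D p).Nonempty
  | atomO s p => ¬ D s ⊆ D p
  | neg φ => ¬ eval D φ
  | conj φ ψ => eval D φ ∧ eval D ψ
  | disj φ ψ => eval D φ ∨ eval D ψ
  | impl φ ψ => eval D φ → eval D ψ
  | equiv φ ψ => eval D φ ↔ eval D ψ

/-- Derivability from a set of specific axioms, over classical propositional
logic, with modus ponens and uniform substitution. -/
inductive Deriv (Ax : LForm → Prop) : LForm → Prop
  | ax {φ} : Ax φ → Deriv Ax φ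
  | taut {φ} : Taut φ → Deriv Ax φ
  | mp {φ ψ} : Deriv Ax (impl φ ψ) → Deriv Ax φ → Deriv Ax ψ
  | subst {φ} (σ : Nat → Nat) : Deriv Ax φ → Deriv Ax (rename σ φ)

/-- The specific axioms of Łukasiewicz's calculus. -/
def LukAx : LForm → Prop := fun φ =>
  (∃ S, φ = atomA S S) ∨
  (∃ S, φ = atomI S S) ∨
  (∃ M P S, φ = impl (conj (atomA M P) (atomA S M)) (atomA S P)) ∨
  (∃ M P S, φ = impl (conj (atomA M P) (atomI M S)) (atomI S P)) ∨
  (∃ S P, φ = equiv (atomE S P) (neg (atomI S P))) ∨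
  (∃ S P, φ = equiv (atomO S P) (neg (atomA S P)))

/-- The specific axioms of Shepherdson's system Sh. -/
def ShAx : LForm → Prop := fun φ =>
  (∃ S, φ = atomA S S) ∨
  (∃ M P S, φ = impl (conj (atomA M P) (atomA S M)) (atomA S P)) ∨
  (∃ M P S, φ = impl (conj (atomA M P) (atomI M S)) (atomI S P)) ∨
  (∃ S P, φ = impl (atomI S P) (atomI S S)) ∨
  (∃ S P, φ = impl (neg (atomI S S)) (atomA S P)) ∨
  (∃ S P, φ = equiv (atomE S P) (neg (atomI S P))) ∨
  (∃ S P, φ = equiv (atomO S P) (neg (atomA S P)))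

end LForm


namespace LForm

/-! ### Auxiliary development -/

/-- A "good" Boolean valuation of the a- and i-atoms. -/
def Good (A I : Nat → Nat → Bool) : Prop :=
  (∀ n, A n n = true) ∧ (∀ m p s, A m p = true → A s m = true → A s p = true) ∧
  (∀ n, I n n = true) ∧ (∀ m p s, A m p = true → I m s = true → I s p = true)

lemma Good.symmI {A I : Nat → Nat → Bool} (h : Good A I) {s p : Nat}
    (hsp : I s p = true) : I p s = true :=
  h.2.2.2 s s p (h.1 s) hsp

/-- Boolean evaluation with E and O defined from I and A. -/
def gval (A I : Nat → Nat → Bool) : LForm → Bool :=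
  beval A I (fun s p => !I s p) (fun s p => !A s p)

/-- Canonical model built from a good valuation. -/
def GD (A I : Nat → Nat → Bool) (n : Nat) : Set (Nat × Nat) :=
  {q | I q.1 q.2 = true ∧ (A q.1 n = true ∨ A q.2 n = true)}

lemma GD_nonempty {A I : Nat → Nat → Bool} (h : Good A I) (n : Nat) :
    (GD A I n).Nonempty :=
  ⟨(n, n), h.2.2.1 n, Or.inl (h.1 n)⟩

lemma GD_subset {A I : Nat → Nat → Bool} (h : Good A I) (s p : Nat) :
    GD A I s ⊆ GD A I p ↔ A s p = true := by
  constructor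
  · intro hsub
    have hmem : (s, s) ∈ GD A I s := ⟨h.2.2.1 s, Or.inl (h.1 s)⟩
    rcases hsub hmem with ⟨_, h1 | h1⟩ <;> exact h1
  · rintro hA q ⟨hI, hq⟩
    exact ⟨hI, hq.imp (fun h1 => h.2.1 s p q.1 hA h1) (fun h1 => h.2.1 s p q.2 hA h1)⟩

lemma GD_inter {A I : Nat → Nat → Bool} (h : Good A I) (s p : Nat) :
    (GD A I s ∩ GD A I p).Nonempty ↔ I s p = true := by
  obtain ⟨hrA, htA, hrI, hD⟩ := h
  constructor
  · rintro ⟨⟨x, y⟩, ⟨hxy, h1⟩, ⟨-, h2⟩⟩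
    have hxs : I x s = true := by
      rcases h1 with h1 | h1
      · exact hD x s x h1 (hrI x)
      · exact hD y s x h1 (Good.symmI ⟨hrA, htA, hrI, hD⟩ hxy)
    have hsx : I s x := Good.symmI ⟨hrA, htA, hrI, hD⟩ hxs
    rcases h2 with h2 | h2
    · exact hD x p s h2 hxs
    · -- need I y s
      have hys : I y s = true := by
        rcases h1 with h1 | h1
        · exact hD x s y h1 hxy
        · exact hD y s y h1 (hrI y)
      exact hD y p s h2 hys
  · intro hI
    exact ⟨(s, p), ⟨hI, Or.inl (hrA s)⟩, ⟨hI, Or.inr (hrA p)⟩⟩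


lemma imp_iff_bool (a b : Bool) : (a = true → b = true) ↔ (a = false ∨ b = true) := by
  cases a <;> simp

lemma bor_imp_iff (a b : Bool) : ((!a) || b) = true ↔ (a = true → b = true) := by
  cases a <;> cases b <;> simp

lemma beq_true_iff (a b : Bool) : (a == b) = true ↔ (a = true ↔ b = true) := by
  cases a <;> cases b <;> simp

lemma eval_gval {A I : Nat → Nat → Bool} (h : Good A I) :
    ∀ φ : LForm, eval (GD A I) φ ↔ gval A I φ = true := by
  intro φ
  induction φ with
  | atomA s p => exact GD_subset h s p
  | atomI s p => exact GD_inter h s p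
  | atomE s p =>
      simp only [eval, gval, beval, Bool.not_eq_true', ← Bool.not_eq_true]
      rw [GD_inter h s p]
  | atomO s p =>
      simp only [eval, gval, beval, Bool.not_eq_true', ← Bool.not_eq_true]
      rw [GD_subset h s p]
  | neg φ ih => simp only [eval, gval, beval] at *; simp [ih]
  | conj φ ψ ih1 ih2 => simp only [eval, gval, beval] at *; simp [ih1, ih2]
  | disj φ ψ ih1 ih2 => simp only [eval, gval, beval] at *; simp [ih1, ih2]
  | impl φ ψ ih1 ih2 => simp only [eval, gval, beval] at *; simp [ih1, ih2]; exact imp_iff_bool _ _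
  | equiv φ ψ ih1 ih2 => simp only [eval, gval, beval] at *; simp [beq_true_iff, ih1, ih2]

open Classical in
/-- Connecting set-theoretic evaluation with Boolean evaluation. -/
lemma eval_iff_beval {α : Type} (D : Nat → Set α) :
    ∀ φ : LForm, eval D φ ↔ beval
      (fun s p => decide (D s ⊆ D p)) (fun s p => decide ((D s ∩ D p).Nonempty))
      (fun s p => !decide ((D s ∩ D p).Nonempty)) (fun s p => !decide (D s ⊆ D p))
      φ = true := by
  intro φ
  induction φ with
  | atomA s p => simp [eval, beval]
  | atomI s p => simp [eval, beval]
  | atomE s p => simp [eval, beval]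
  | atomO s p => simp [eval, beval]
  | neg φ ih => simp [eval, beval, ih]
  | conj φ ψ ih1 ih2 => simp [eval, beval, ih1, ih2]
  | disj φ ψ ih1 ih2 => simp [eval, beval, ih1, ih2]
  | impl φ ψ ih1 ih2 => simp [eval, beval, ih1, ih2]; exact imp_iff_bool _ _
  | equiv φ ψ ih1 ih2 => simp [eval, beval, beq_true_iff, ih1, ih2]

lemma eval_rename {α : Type} (D : Nat → Set α) (σ : Nat → Nat) :
    ∀ φ : LForm, eval D (rename σ φ) ↔ eval (fun n => D (σ n)) φ := by
  intro φ
  induction φ with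
  | atomA s p => simp [eval, rename]
  | atomI s p => simp [eval, rename]
  | atomE s p => simp [eval, rename]
  | atomO s p => simp [eval, rename]
  | neg φ ih => simp [eval, rename, ih]
  | conj φ ψ ih1 ih2 => simp [eval, rename, ih1, ih2]
  | disj φ ψ ih1 ih2 => simp [eval, rename, ih1, ih2]
  | impl φ ψ ih1 ih2 => simp [eval, rename, ih1, ih2]
  | equiv φ ψ ih1 ih2 => simp [eval, rename, ih1, ih2]

/-- Soundness. -/
lemma luk_sound {φ : LForm} (h : Deriv LukAx φ) :
    ∀ (U : Type), Nonempty U → ∀ D : Nat → Set U,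
      (∀ n, (D n).Nonempty) → eval D φ := by
  induction h with
  | ax hax =>
      intro U _ D hD
      rcases hax with ⟨S, rfl⟩ | ⟨S, rfl⟩ | ⟨M, P, S, rfl⟩ | ⟨M, P, S, rfl⟩ |
        ⟨S, P, rfl⟩ | ⟨S, P, rfl⟩
      · exact fun x hx => hx
      · simpa [eval, Set.inter_self] using hD S
      · rintro ⟨h1, h2⟩ x hx
        exact h1 (h2 hx)
      · rintro ⟨h1, ⟨x, hx1, hx2⟩⟩
        exact ⟨x, hx2, h1 hx1⟩
      · exact Iff.rfl
      · exact Iff.rfl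
  | taut ht =>
      intro U _ D hD
      rw [eval_iff_beval D]
      exact ht _ _ _ _
  | mp h1 h2 ih1 ih2 =>
      intro U hU D hD
      exact ih1 U hU D hD (ih2 U hU D hD)
  | subst σ h ih =>
      intro U hU D hD
      rw [eval_rename]
      exact ih U hU (fun n => D (σ n)) (fun n => hD (σ n))

/-- The name letters occurring in a formula. -/
def names : LForm → List Nat
  | atomA s p => [s, p]
  | atomI s p => [s, p]
  | atomE s p => [s, p]
  | atomO s p => [s, p]
  | neg φ => names φ
  | conj φ ψ => names φ ++ names ψ
  | disj φ ψ => names φ ++ names ψ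
  | impl φ ψ => names φ ++ names ψ
  | equiv φ ψ => names φ ++ names ψ

lemma beval_congr {vA vI vE vO vA' vI' vE' vO' : Nat → Nat → Bool} :
    ∀ φ : LForm, (∀ s p, s ∈ names φ → p ∈ names φ →
      vA s p = vA' s p ∧ vI s p = vI' s p ∧ vE s p = vE' s p ∧ vO s p = vO' s p) →
    beval vA vI vE vO φ = beval vA' vI' vE' vO' φ := by
  intro φ
  induction φ with
  | atomA s p => intro h; exact (h s p (by simp [names]) (by simp [names])).1
  | atomI s p => intro h; exact (h s p (by simp [names]) (by simp [names])).2.1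
  | atomE s p => intro h; exact (h s p (by simp [names]) (by simp [names])).2.2.1
  | atomO s p => intro h; exact (h s p (by simp [names]) (by simp [names])).2.2.2
  | neg φ ih => intro h; simp only [beval]; rw [ih h]
  | conj φ ψ ih1 ih2 =>
      intro h; simp only [beval]
      rw [ih1 fun s p hs hp => h s p (by simp [names, hs]) (by simp [names, hp]),
          ih2 fun s p hs hp => h s p (by simp [names, hs]) (by simp [names, hp])]
  | disj φ ψ ih1 ih2 =>
      intro h; simp only [beval]
      rw [ih1 fun s p hs hp => h s p (by simp [names, hs]) (by simp [names, hp]),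
          ih2 fun s p hs hp => h s p (by simp [names, hs]) (by simp [names, hp])]
  | impl φ ψ ih1 ih2 =>
      intro h; simp only [beval]
      rw [ih1 fun s p hs hp => h s p (by simp [names, hs]) (by simp [names, hp]),
          ih2 fun s p hs hp => h s p (by simp [names, hs]) (by simp [names, hp])]
  | equiv φ ψ ih1 ih2 =>
      intro h; simp only [beval]
      rw [ih1 fun s p hs hp => h s p (by simp [names, hs]) (by simp [names, hp]),
          ih2 fun s p hs hp => h s p (by simp [names, hs]) (by simp [names, hp])]

/-- The axiom instances built from a list of name letters. -/
def axList (N : List Nat) : List LForm :=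
  (N.map fun n => atomA n n) ++ (N.map fun n => atomI n n) ++
  (N.flatMap fun m => N.flatMap fun p => N.map fun s =>
    impl (conj (atomA m p) (atomA s m)) (atomA s p)) ++
  (N.flatMap fun m => N.flatMap fun p => N.map fun s =>
    impl (conj (atomA m p) (atomI m s)) (atomI s p)) ++
  (N.flatMap fun s => N.map fun p => equiv (atomE s p) (neg (atomI s p))) ++
  (N.flatMap fun s => N.map fun p => equiv (atomO s p) (neg (atomA s p)))

lemma axList_luk {N : List Nat} {γ : LForm} (h : γ ∈ axList N) : LukAx γ := by
  simp only [axList, List.mem_append, List.mem_map, List.mem_flatMap] at h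
  rcases h with ((((⟨n, _, rfl⟩ | ⟨n, _, rfl⟩) | ⟨m, _, p, _, s, _, rfl⟩) |
      ⟨m, _, p, _, s, _, rfl⟩) | ⟨s, _, p, _, rfl⟩) | ⟨s, _, p, _, rfl⟩
  · exact Or.inl ⟨n, rfl⟩
  · exact Or.inr (Or.inl ⟨n, rfl⟩)
  · exact Or.inr (Or.inr (Or.inl ⟨m, p, s, rfl⟩))
  · exact Or.inr (Or.inr (Or.inr (Or.inl ⟨m, p, s, rfl⟩)))
  · exact Or.inr (Or.inr (Or.inr (Or.inr (Or.inl ⟨s, p, rfl⟩))))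
  · exact Or.inr (Or.inr (Or.inr (Or.inr (Or.inr ⟨s, p, rfl⟩))))

lemma mem_axList_refA {N : List Nat} {n : Nat} (hn : n ∈ N) : atomA n n ∈ axList N := by
  simp only [axList, List.mem_append, List.mem_map, List.mem_flatMap]
  exact Or.inl (Or.inl (Or.inl (Or.inl (Or.inl ⟨n, hn, rfl⟩))))

lemma mem_axList_refI {N : List Nat} {n : Nat} (hn : n ∈ N) : atomI n n ∈ axList N := by
  simp only [axList, List.mem_append, List.mem_map, List.mem_flatMap]
  exact Or.inl (Or.inl (Or.inl (Or.inl (Or.inr ⟨n, hn, rfl⟩))))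

lemma mem_axList_barb {N : List Nat} {m p s : Nat} (hm : m ∈ N) (hp : p ∈ N) (hs : s ∈ N) :
    impl (conj (atomA m p) (atomA s m)) (atomA s p) ∈ axList N := by
  simp only [axList, List.mem_append, List.mem_map, List.mem_flatMap]
  exact Or.inl (Or.inl (Or.inl (Or.inr ⟨m, hm, p, hp, s, hs, rfl⟩)))

lemma mem_axList_dat {N : List Nat} {m p s : Nat} (hm : m ∈ N) (hp : p ∈ N) (hs : s ∈ N) :
    impl (conj (atomA m p) (atomI m s)) (atomI s p) ∈ axList N := by
  simp only [axList, List.mem_append, List.mem_map, List.mem_flatMap]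
  exact Or.inl (Or.inl (Or.inr ⟨m, hm, p, hp, s, hs, rfl⟩))

lemma mem_axList_E {N : List Nat} {s p : Nat} (hs : s ∈ N) (hp : p ∈ N) :
    equiv (atomE s p) (neg (atomI s p)) ∈ axList N := by
  simp only [axList, List.mem_append, List.mem_map, List.mem_flatMap]
  exact Or.inl (Or.inr ⟨s, hs, p, hp, rfl⟩)

lemma mem_axList_O {N : List Nat} {s p : Nat} (hs : s ∈ N) (hp : p ∈ N) :
    equiv (atomO s p) (neg (atomA s p)) ∈ axList N := by
  simp only [axList, List.mem_append, List.mem_map, List.mem_flatMap]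
  exact Or.inr ⟨s, hs, p, hp, rfl⟩

lemma beval_foldr {vA vI vE vO : Nat → Nat → Bool} {φ : LForm} :
    ∀ Γ : List LForm, beval vA vI vE vO (Γ.foldr impl φ) = true ↔
      ((∀ γ ∈ Γ, beval vA vI vE vO γ = true) → beval vA vI vE vO φ = true) := by
  intro Γ
  induction Γ with
  | nil => simp
  | cons γ Γ ih =>
      simp only [List.foldr_cons, beval, Bool.or_eq_true, Bool.not_eq_true', ih,
        List.mem_cons]
      constructor
      · rintro (hγ | h) hall
        · exact absurd (hall γ (Or.inl rfl)) (by simp [hγ])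
        · exact h fun x hx => hall x (Or.inr hx)
      · intro h
        by_cases hγ : beval vA vI vE vO γ = true
        · exact Or.inr fun hall => h fun x hx => by
            rcases hx with rfl | hx
            · exact hγ
            · exact hall x hx
        · exact Or.inl (by simpa using hγ)

lemma deriv_foldr {Ax : LForm → Prop} {φ : LForm} :
    ∀ Γ : List LForm, (∀ γ ∈ Γ, Deriv Ax γ) →
      Deriv Ax (Γ.foldr impl φ) → Deriv Ax φ := by
  intro Γ
  induction Γ with
  | nil => intro _ h; exact h
  | cons γ Γ ih =>
      intro hall h
      exact ih (fun x hx => hall x (List.mem_cons_of_mem _ hx))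
        (Deriv.mp h (hall γ List.mem_cons_self))

/-- The key propositional reduction. -/
lemma key_taut {φ : LForm} (hφ : ∀ A I, Good A I → gval A I φ = true) :
    Taut ((axList (names φ)).foldr impl φ) := by
  intro vA vI vE vO
  rw [beval_foldr]
  intro hΓ
  set N := names φ with hN
  have hA : ∀ n ∈ N, vA n n = true := fun n hn => by
    simpa [beval] using hΓ _ (mem_axList_refA hn)
  have hI : ∀ n ∈ N, vI n n = true := fun n hn => by
    simpa [beval] using hΓ _ (mem_axList_refI hn)
  have hBarb : ∀ m ∈ N, ∀ p ∈ N, ∀ s ∈ N, vA m p = true → vA s m = true →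
      vA s p = true := by
    intro m hm p hp s hs h1 h2
    have := hΓ _ (mem_axList_barb hm hp hs)
    simpa [beval, h1, h2] using this
  have hDat : ∀ m ∈ N, ∀ p ∈ N, ∀ s ∈ N, vA m p = true → vI m s = true →
      vI s p = true := by
    intro m hm p hp s hs h1 h2
    have := hΓ _ (mem_axList_dat hm hp hs)
    simpa [beval, h1, h2] using this
  have hE : ∀ s ∈ N, ∀ p ∈ N, vE s p = !vI s p := by
    intro s hs p hp
    have := hΓ _ (mem_axList_E hs hp)
    simpa [beval] using this
  have hO : ∀ s ∈ N, ∀ p ∈ N, vO s p = !vA s p := by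
    intro s hs p hp
    have := hΓ _ (mem_axList_O hs hp)
    simpa [beval] using this
  -- the modified good valuation
  set A' : Nat → Nat → Bool := fun s p =>
    (s == p) || (decide (s ∈ N) && decide (p ∈ N) && vA s p) with hA'
  set I' : Nat → Nat → Bool := fun s p =>
    (s == p) || (decide (s ∈ N) && decide (p ∈ N) && vI s p) with hI'
  have hA'iff : ∀ s p, A' s p = true ↔ (s = p ∨ (s ∈ N ∧ p ∈ N ∧ vA s p = true)) := by
    intro s p; simp [hA', and_assoc]
  have hI'iff : ∀ s p, I' s p = true ↔ (s = p ∨ (s ∈ N ∧ p ∈ N ∧ vI s p = true)) := by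
    intro s p; simp [hI', and_assoc]
  have hgood : Good A' I' := by
    refine ⟨fun n => by simp [hA'], ?_, fun n => by simp [hI'], ?_⟩
    · intro m p s h1 h2
      rw [hA'iff] at h1 h2 ⊢
      rcases h1 with rfl | ⟨hm, hp, h1⟩
      · exact h2
      · rcases h2 with rfl | ⟨hs, _, h2⟩
        · exact Or.inr ⟨hm, hp, h1⟩
        · exact Or.inr ⟨hs, hp, hBarb m hm p hp s hs h1 h2⟩
    · intro m p s h1 h2
      rw [hA'iff] at h1
      rw [hI'iff] at h2 ⊢
      rcases h1 with rfl | ⟨hm, hp, h1⟩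
      · -- m = p : need symmetry of I'
        rcases h2 with rfl | ⟨_, hs, h2⟩
        · exact Or.inl rfl
        · exact Or.inr ⟨hs, ‹m ∈ N›, hDat m ‹m ∈ N› m ‹m ∈ N› s hs (hA m ‹m ∈ N›) h2⟩
      · rcases h2 with rfl | ⟨_, hs, h2⟩
        · exact Or.inr ⟨hm, hp, hDat m hm p hp m hm h1 (hI m hm)⟩
        · exact Or.inr ⟨hs, hp, hDat m hm p hp s hs h1 h2⟩
  have hg := hφ A' I' hgood
  have hagree : ∀ s p, s ∈ names φ → p ∈ names φ →
      vA s p = A' s p ∧ vI s p = I' s p ∧ vE s p = (!I' s p) ∧ vO s p = (!A' s p) := by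
    intro s p hs hp
    have hsN : s ∈ N := hs
    have hpN : p ∈ N := hp
    have e1 : vA s p = A' s p := by
      by_cases hsp : s = p
      · subst hsp
        simp [hA', hA s hsN]
      · simp [hA', hsp, hsN, hpN]
    have e2 : vI s p = I' s p := by
      by_cases hsp : s = p
      · subst hsp
        simp [hI', hI s hsN]
      · simp [hI', hsp, hsN, hpN]
    exact ⟨e1, e2, by rw [hE s hsN p hpN, e2], by rw [hO s hsN p hpN, e1]⟩
  calc beval vA vI vE vO φ
      = beval A' I' (fun s p => !I' s p) (fun s p => !A' s p) φ :=
        beval_congr φ hagree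
    _ = true := hg

end LForm

open LForm

/-- Soundness and completeness of Łukasiewicz's calculus: a formula is a
thesis if and only if it is a traditional set-theoretic tautology. -/
theorem lukasiewicz_sound_complete (φ : LForm) :
    Deriv LukAx φ ↔
      ∀ (U : Type), Nonempty U → ∀ D : Nat → Set U,
        (∀ n, (D n).Nonempty) → eval D φ := by
  constructor
  · exact fun h => luk_sound h
  · intro h
    have hφ : ∀ A I, Good A I → gval A I φ = true := by
      intro A I hg
      rw [← eval_gval hg]
      exact h (Nat × Nat) ⟨(0, 0)⟩ (GD A I) (GD_nonempty hg)
    refine deriv_foldr (axList (names φ)) (fun γ hγ => Deriv.ax (axList_luk hγ)) ?_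
    exact Deriv.taut (key_taut hφ)
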